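/- Let Sid = {a₁, ..., a_r} ⊆ {1, ..., ⌊n/2⌋} be a Sidon set and let A = {1, 3, ..., 2n-1} ∪ {4a₁ - 2, 4a₂ - 2, ..., 4a_r - 2}. Then there do not exist six distinct integers b₁, ..., b₆ such that all fifteen pairwise sums bᵢ + bⱼ (1 ≤ i < j ≤ 6) lie in A. -/
import Mathlib


theorem stmt_19 (n : ℕ) (S : Finset ℕ) (hS : S ⊆ Finset.Icc 1 (n / 2))
    (hSidon : ∀ a ∈ S, ∀ b ∈ S, ∀ c ∈ S, ∀ d ∈ S,
      a + b = c + d → (a = c ∧ b = d) ∨ (a = d ∧ b = c)) :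
    ¬ ∃ b : Fin 6 → ℤ, Function.Injective b ∧
      ∀ i j : Fin 6, i < j →
        b i + b j ∈ {x : ℤ | (1 ≤ x ∧ x ≤ 2 * (n : ℤ) ∧ Odd x) ∨
          ∃ a ∈ S, x = 4 * (a : ℤ) - 2} := by
  classical
  rintro ⟨b, hinj, hsum⟩
  -- the sum of any two distinct b's lies in A
  have hsum' : ∀ i j : Fin 6, i ≠ j →
      (1 ≤ b i + b j ∧ b i + b j ≤ 2 * (n : ℤ) ∧ Odd (b i + b j)) ∨
      ∃ a ∈ S, b i + b j = 4 * (a : ℤ) - 2 := by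
    intro i j hij
    rcases lt_or_gt_of_ne hij with h | h
    · exact hsum i j h
    · have := hsum j i h
      rwa [add_comm (b j)] at this
  -- sums are never ≡ 0 mod 4
  have hmod : ∀ i j : Fin 6, i ≠ j → (b i + b j) % 4 ≠ 0 := by
    intro i j hij
    rcases hsum' i j hij with ⟨_, _, k, hk⟩ | ⟨a, _, ha⟩
    · omega
    · omega
  -- residues 1 and 3 cannot both occur
  have h13 : ∀ i j : Fin 6, b i % 4 = 1 → b j % 4 = 3 → False := by
    intro i j hi hj
    have hij : i ≠ j := fun h => by subst h; omega
    exact hmod i j hij (by omega)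
  set T := Finset.univ.filter (fun i : Fin 6 => b i % 4 = 1 ∨ b i % 4 = 3) with hTdef
  -- at least 4 indices have odd residue mod 4
  have hcard : 4 ≤ T.card := by
    have h := Finset.card_filter_add_card_filter_not
      (s := (Finset.univ : Finset (Fin 6)))
      (p := fun i => b i % 4 = 1 ∨ b i % 4 = 3)
    have hsub : Finset.univ.filter (fun i : Fin 6 => ¬(b i % 4 = 1 ∨ b i % 4 = 3)) ⊆
        Finset.univ.filter (fun i : Fin 6 => b i % 4 = 0) ∪
        Finset.univ.filter (fun i : Fin 6 => b i % 4 = 2) := by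
      intro i hi
      simp only [Finset.mem_filter, Finset.mem_union, Finset.mem_univ, true_and] at hi ⊢
      omega
    have hle := Finset.card_le_card hsub
    have hun := Finset.card_union_le
      (Finset.univ.filter (fun i : Fin 6 => b i % 4 = 0))
      (Finset.univ.filter (fun i : Fin 6 => b i % 4 = 2))
    have h0 : (Finset.univ.filter (fun i : Fin 6 => b i % 4 = 0)).card ≤ 1 := by
      by_contra hc
      push_neg at hc
      obtain ⟨i, hi, j, hj, hij⟩ := Finset.one_lt_card.mp hc
      simp only [Finset.mem_filter, Finset.mem_univ, true_and] at hi hj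
      exact hmod i j hij (by omega)
    have h2 : (Finset.univ.filter (fun i : Fin 6 => b i % 4 = 2)).card ≤ 1 := by
      by_contra hc
      push_neg at hc
      obtain ⟨i, hi, j, hj, hij⟩ := Finset.one_lt_card.mp hc
      simp only [Finset.mem_filter, Finset.mem_univ, true_and] at hi hj
      exact hmod i j hij (by omega)
    have hcu : (Finset.univ : Finset (Fin 6)).card = 6 := by simp
    rw [← hTdef] at h
    omega
  -- pairwise sums within T are ≡ 2 mod 4
  have hT2 : ∀ i ∈ T, ∀ j ∈ T, i ≠ j → (b i + b j) % 4 = 2 := by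
    intro i hi j hj hij
    rw [hTdef, Finset.mem_filter] at hi hj
    rcases hi.2 with h1 | h1 <;> rcases hj.2 with h2 | h2
    · omega
    · exact absurd (h13 i j h1 h2) (fun h => h)
    · exact absurd (h13 j i h2 h1) (fun h => h)
    · omega
  -- hence such sums come from the Sidon part
  have key : ∀ i ∈ T, ∀ j ∈ T, i ≠ j → ∃ a ∈ S, b i + b j = 4 * (a : ℤ) - 2 := by
    intro i hi j hj hij
    have h2 := hT2 i hi j hj hij
    rcases hsum' i j hij with ⟨_, _, k, hk⟩ | h
    · omega
    · exact h
  -- extract four distinct indices from T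
  obtain ⟨i1, hi1⟩ := Finset.card_pos.mp (by omega : 0 < T.card)
  have c1 : 3 ≤ (T.erase i1).card := by rw [Finset.card_erase_of_mem hi1]; omega
  obtain ⟨i2, hi2⟩ := Finset.card_pos.mp (by omega : 0 < (T.erase i1).card)
  have c2 : 2 ≤ ((T.erase i1).erase i2).card := by
    rw [Finset.card_erase_of_mem hi2]; omega
  obtain ⟨i3, hi3⟩ := Finset.card_pos.mp (by omega : 0 < ((T.erase i1).erase i2).card)
  have c3 : 1 ≤ (((T.erase i1).erase i2).erase i3).card := by
    rw [Finset.card_erase_of_mem hi3]; omega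
  obtain ⟨i4, hi4⟩ := Finset.card_pos.mp
    (by omega : 0 < (((T.erase i1).erase i2).erase i3).card)
  obtain ⟨h43, h42, h41, hi4T⟩ :
      i4 ≠ i3 ∧ i4 ≠ i2 ∧ i4 ≠ i1 ∧ i4 ∈ T := by
    simp only [Finset.mem_erase] at hi4
    exact ⟨hi4.1, hi4.2.1, hi4.2.2.1, hi4.2.2.2⟩
  obtain ⟨h32, h31, hi3T⟩ : i3 ≠ i2 ∧ i3 ≠ i1 ∧ i3 ∈ T := by
    simp only [Finset.mem_erase] at hi3
    exact ⟨hi3.1, hi3.2.1, hi3.2.2⟩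
  obtain ⟨h21, hi2T⟩ : i2 ≠ i1 ∧ i2 ∈ T := by
    simp only [Finset.mem_erase] at hi2
    exact ⟨hi2.1, hi2.2⟩
  -- get the Sidon elements
  obtain ⟨a12, ha12S, ha12⟩ := key i1 hi1 i2 hi2T (Ne.symm h21)
  obtain ⟨a34, ha34S, ha34⟩ := key i3 hi3T i4 hi4T (Ne.symm h43)
  obtain ⟨a13, ha13S, ha13⟩ := key i1 hi1 i3 hi3T (Ne.symm h31)
  obtain ⟨a24, ha24S, ha24⟩ := key i2 hi2T i4 hi4T (Ne.symm h42)
  have hz : (a12 : ℤ) + a34 = a13 + a24 := by omega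
  have hnat : a12 + a34 = a13 + a24 := by exact_mod_cast hz
  rcases hSidon a12 ha12S a34 ha34S a13 ha13S a24 ha24S hnat with ⟨e1, _⟩ | ⟨e1, _⟩
  · subst e1
    have : b i2 = b i3 := by omega
    exact h32 (hinj this).symm
  · subst e1
    have : b i1 = b i4 := by omega
    exact h41 (hinj this).symm
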